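/- Let G₀ = {z : |z-a| < ε} ⊂ G with 0 < ε < 1. For every z ∈ G, (1/π)∬_{G₀} dA(ζ)/(|ζ-a||ζ-z|) ≤ 8 ln(1/|z-a|) + C for some constant C depending only on ε (for |z-a| sufficiently small). Consequently if V^ is measurable with |V^(z)| ≤ μ/|z-a| on G, then ω(z) = (T_G V^)(z) satisfies |ω(z)| ≤ μ(M + 8 ln(1/|z-a|)), and hence M'|z-a|^{8μ} ≤ |exp(ω(z))| ≤ M'/|z-a|^{8μ} for z ∈ G near a, for suitable constants M, M' > 0. -/

import Mathlib

open MeasureTheory Real Set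



lemma radial_value (f : ℝ → ℝ) :
    ∫ z : ℂ, f ‖z‖ = (2 * π) * ∫ ρ in Ioi (0:ℝ), ρ * f ρ := by
  rw [MeasureTheory.integral_fun_norm_addHaar (volume : Measure ℂ) f]
  simp only [Complex.finrank_real_complex, Measure.real, Complex.volume_ball, smul_eq_mul, nsmul_eq_mul,
    pow_one]
  norm_num
  ring

lemma radial_integrable {f : ℝ → ℝ} (hf : Measurable f)
    (hi : IntegrableOn (fun ρ => ρ * f ρ) (Ioi (0:ℝ))) :
    Integrable (fun z : ℂ => f ‖z‖) := by
  have hgm : Measurable (fun p : ℝ × ℝ => f (Real.sqrt (p.1^2 + p.2^2))) := by fun_prop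
  have hcomp : (fun z : ℂ => f ‖z‖)
      = (fun p : ℝ × ℝ => f (Real.sqrt (p.1^2 + p.2^2))) ∘ Complex.measurableEquivRealProd := by
    ext z
    simp [Complex.measurableEquivRealProd, Complex.norm_def, Complex.normSq_apply,
      Function.comp]
    congr 1
    ring
  rw [hcomp, Complex.volume_preserving_equiv_real_prod.integrable_comp hgm.aestronglyMeasurable]
  have hsrc : IntegrableOn (fun p : ℝ × ℝ => f (Real.sqrt (p.1^2 + p.2^2))) polarCoord.source := by
    rw [← polarCoord.symm_image_target_eq_source]
    set B : ℝ × ℝ → ℝ × ℝ →L[ℝ] ℝ × ℝ := fun p =>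
      LinearMap.toContinuousLinearMap (Matrix.toLin (Module.Basis.finTwoProd ℝ) (Module.Basis.finTwoProd ℝ)
        !![Real.cos p.2, -p.1 * Real.sin p.2; Real.sin p.2, p.1 * Real.cos p.2]) with hB
    have hBdet : ∀ p : ℝ × ℝ, (B p).det = p.1 := by
      intro p
      conv_rhs => rw [← one_mul p.1, ← Real.cos_sq_add_sin_sq p.2]
      simp only [hB, neg_mul, LinearMap.det_toContinuousLinearMap, LinearMap.det_toLin,
        Matrix.det_fin_two_of, sub_neg_eq_add]
      ring
    rw [integrableOn_image_iff_integrableOn_abs_det_fderiv_smul volume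
      polarCoord.open_target.measurableSet
      (fun p _ => (hasFDerivAt_polarCoord_symm p).hasFDerivWithinAt) polarCoord.symm.injOn _]
    have hbase : IntegrableOn (fun p : ℝ × ℝ => p.1 * f p.1) polarCoord.target := by
      rw [polarCoord_target, IntegrableOn, MeasureTheory.Measure.volume_eq_prod, ← Measure.prod_restrict]
      have h1 : Integrable (fun p : ℝ × ℝ =>
          (fun ρ => ρ * f ρ) p.1 * (fun _ => (1:ℝ)) p.2)
          ((volume.restrict (Ioi 0)).prod (volume.restrict (Ioo (-π) π))) :=
        Integrable.mul_prod hi (integrableOn_const (by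
          rw [Real.volume_Ioo]; exact ENNReal.ofReal_ne_top))
      simpa using h1
    refine hbase.congr_fun (fun p hp => ?_) polarCoord.open_target.measurableSet
    rw [polarCoord_target] at hp
    obtain ⟨hp1, _⟩ := hp
    have hp1' : (0:ℝ) < p.1 := hp1
    show p.1 * f p.1 = |(fderivPolarCoordSymm p).det| • f _
    rw [det_fderivPolarCoordSymm, abs_of_pos hp1', smul_eq_mul]
    congr 2
    have : (polarCoord.symm p).1 ^ 2 + (polarCoord.symm p).2 ^ 2 = p.1 ^ 2 := by
      simp [polarCoord_symm_apply]
      ring_nf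
      rw [← mul_add, Real.cos_sq_add_sin_sq]  -- maybe
      ring
    rw [this, Real.sqrt_sq hp1'.le]
  rwa [IntegrableOn, Measure.restrict_congr_set polarCoord_source_ae_eq_univ,
    Measure.restrict_univ] at hsrc

lemma radial_value' (f : ℝ → ℝ) (c : ℂ) :
    ∫ z : ℂ, f ‖z - c‖ = (2 * π) * ∫ ρ in Ioi (0:ℝ), ρ * f ρ := by
  rw [← radial_value f]
  exact integral_sub_right_eq_self (fun z : ℂ => f ‖z‖) c

lemma radial_integrable' {f : ℝ → ℝ} (hf : Measurable f)
    (hi : IntegrableOn (fun ρ => ρ * f ρ) (Ioi (0:ℝ))) (c : ℂ) :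
    Integrable (fun z : ℂ => f ‖z - c‖) :=
  (radial_integrable hf hi).comp_sub_right c

lemma aux1_mul {r : ℝ} (hr : 0 < r) :
    (fun ρ : ℝ => ρ * (Ioo (0:ℝ) r).indicator (fun ρ => ρ⁻¹) ρ)
      = (Ioo (0:ℝ) r).indicator (fun _ => (1:ℝ)) := by
  funext ρ
  by_cases h : ρ ∈ Ioo (0:ℝ) r
  · rw [Set.indicator_of_mem h, Set.indicator_of_mem h, mul_inv_cancel₀ h.1.ne']
  · rw [Set.indicator_of_notMem h, Set.indicator_of_notMem h, mul_zero]

lemma aux1_int {r : ℝ} (hr : 0 < r) (c : ℂ) :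
    Integrable (fun z : ℂ => (Ioo (0:ℝ) r).indicator (fun ρ => ρ⁻¹) ‖z - c‖) := by
  apply radial_integrable' (Measurable.indicator measurable_inv measurableSet_Ioo)
  rw [aux1_mul hr]
  exact ((integrable_indicator_iff measurableSet_Ioo).2
    (integrableOn_const (by rw [Real.volume_Ioo]; exact ENNReal.ofReal_ne_top))).integrableOn

lemma aux1_val {r : ℝ} (hr : 0 < r) (c : ℂ) :
    ∫ z : ℂ, (Ioo (0:ℝ) r).indicator (fun ρ => ρ⁻¹) ‖z - c‖ = 2 * π * r := by
  rw [radial_value', aux1_mul hr]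
  rw [MeasureTheory.setIntegral_indicator measurableSet_Ioo,
    Set.inter_eq_self_of_subset_right Ioo_subset_Ioi_self, setIntegral_const, Real.volume_real_Ioo_of_le hr.le]
  rw [smul_eq_mul, mul_one]
  ring

lemma aux2_mul {r R : ℝ} (hr : 0 < r) :
    (fun ρ : ℝ => ρ * (Ico r R).indicator (fun ρ => (ρ^2)⁻¹) ρ)
      = (Ico r R).indicator (fun ρ => ρ⁻¹) := by
  funext ρ
  by_cases h : ρ ∈ Ico r R
  · rw [Set.indicator_of_mem h, Set.indicator_of_mem h, sq, mul_inv, ← mul_assoc,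
      mul_inv_cancel₀ (by linarith [h.1] : ρ ≠ 0), one_mul]
  · rw [Set.indicator_of_notMem h, Set.indicator_of_notMem h, mul_zero]

lemma aux2_int {r R : ℝ} (hr : 0 < r) (c : ℂ) :
    Integrable (fun z : ℂ => (Ico r R).indicator (fun ρ => (ρ^2)⁻¹) ‖z - c‖) := by
  apply radial_integrable' (Measurable.indicator (by fun_prop) measurableSet_Ico)
  rw [aux2_mul hr]
  apply ((integrable_indicator_iff measurableSet_Ico).2 ?_).integrableOn
  apply Measure.integrableOn_of_bounded (M := r⁻¹)
  · rw [Real.volume_Ico]; exact ENNReal.ofReal_lt_top.ne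
  · exact measurable_inv.aestronglyMeasurable
  · refine (ae_restrict_iff' measurableSet_Ico).2 (ae_of_all _ fun ρ hρ => ?_)
    rw [Real.norm_eq_abs, abs_of_nonneg (inv_nonneg.2 (by linarith [hρ.1]))]
    exact inv_anti₀ hr hρ.1

lemma aux2_val {r R : ℝ} (hr : 0 < r) (hR : r < R) (c : ℂ) :
    ∫ z : ℂ, (Ico r R).indicator (fun ρ => (ρ^2)⁻¹) ‖z - c‖ = 2 * π * Real.log (R / r) := by
  rw [radial_value', aux2_mul hr]
  rw [MeasureTheory.setIntegral_indicator measurableSet_Ico,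
    Set.inter_eq_self_of_subset_right (show Ico r R ⊆ Ioi 0 from fun x hx => lt_of_lt_of_le hr hx.1),
    MeasureTheory.integral_Ico_eq_integral_Ioo, ← MeasureTheory.integral_Ioc_eq_integral_Ioo,
    ← intervalIntegral.integral_of_le hR.le,
    integral_inv (by rw [Set.uIcc_of_le hR.le]; intro h; linarith [h.1])]

-- (x*y)⁻¹ ≤ (2/r) * x⁻¹ when 0<x<r active and r ≤ 2y
lemma t1_bound {r x y : ℝ} (hr : 0 < r) (hx : 0 < x) (hxr : x < r) (hy : r ≤ 2*y) :
    (x*y)⁻¹ ≤ (2/r) * (Ioo (0:ℝ) r).indicator (fun ρ => ρ⁻¹) x := by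
  rw [Set.indicator_of_mem (Set.mem_Ioo.mpr ⟨hx, hxr⟩)]
  have hy0 : 0 < y := by linarith
  have h1 : y⁻¹ ≤ 2/r := by
    rw [inv_eq_one_div, div_le_div_iff₀ hy0 hr]
    linarith
  calc (x*y)⁻¹ = y⁻¹ * x⁻¹ := by rw [mul_inv]; ring
    _ ≤ (2/r) * x⁻¹ := by
        apply mul_le_mul_of_nonneg_right h1 (by positivity)

lemma t3_bound {r R x y : ℝ} (hr : 0 < r) (hx : r ≤ x) (hxR : x < R) (hy : 0 < y) (hxy : x ≤ y) :
    (x*y)⁻¹ ≤ (Ico r R).indicator (fun ρ => (ρ^2)⁻¹) x := by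
  rw [Set.indicator_of_mem (Set.mem_Ico.mpr ⟨hx, hxR⟩)]
  have hx0 : 0 < x := lt_of_lt_of_le hr hx
  apply inv_anti₀ (by positivity)
  rw [sq]
  exact mul_le_mul_of_nonneg_left hxy hx0.le

lemma pw_bound {r ε x y : ℝ} (hr : 0 < r) (hrε : r < ε/2) (hε : 0 < ε)
    (hx0 : 0 ≤ x) (hxε : x < ε) (hy0 : 0 ≤ y) (hxyr : r ≤ x + y) (hyxr : y ≤ x + r) :
    (x*y)⁻¹ ≤ (2/r) * (Ioo (0:ℝ) r).indicator (fun ρ => ρ⁻¹) x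
      + (2/r) * (Ioo (0:ℝ) r).indicator (fun ρ => ρ⁻¹) y
      + (Ico r ε).indicator (fun ρ => (ρ^2)⁻¹) x
      + (Ico r (2*ε)).indicator (fun ρ => (ρ^2)⁻¹) y := by
  have hinv_nonneg : ∀ s : Set ℝ, ∀ g : ℝ → ℝ, (∀ ρ, 0 ≤ g ρ) → 0 ≤ s.indicator g x := by
    intro s g hg; exact Set.indicator_nonneg (fun ρ _ => hg ρ) x
  have n1 : 0 ≤ (2/r) * (Ioo (0:ℝ) r).indicator (fun ρ => ρ⁻¹) x :=
    mul_nonneg (by positivity) (Set.indicator_nonneg (fun ρ hρ => inv_nonneg.2 (le_of_lt (Set.mem_Ioo.mp hρ).1)) x)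
  have n2 : 0 ≤ (2/r) * (Ioo (0:ℝ) r).indicator (fun ρ => ρ⁻¹) y :=
    mul_nonneg (by positivity) (Set.indicator_nonneg (fun ρ hρ => inv_nonneg.2 (le_of_lt (Set.mem_Ioo.mp hρ).1)) y)
  have n3 : 0 ≤ (Ico r ε).indicator (fun ρ => (ρ^2)⁻¹) x :=
    Set.indicator_nonneg (fun ρ hρ => by positivity) x
  have n4 : 0 ≤ (Ico r (2*ε)).indicator (fun ρ => (ρ^2)⁻¹) y :=
    Set.indicator_nonneg (fun ρ hρ => by positivity) y
  rcases hx0.eq_or_lt with hx | hx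
  · subst hx; rw [zero_mul, inv_zero]; linarith
  rcases hy0.eq_or_lt with hy | hy
  · subst hy; rw [mul_zero, inv_zero]; linarith
  by_cases hyr : y < r
  · by_cases hxr : x < r
    · by_cases hy2 : r ≤ 2*y
      · linarith [t1_bound hr hx hxr hy2]
      · -- y < r/2, so x > r/2, use t2 (swap)
        have h := t1_bound hr hy hyr (by linarith : r ≤ 2*x)
        rw [mul_comm] at h
        linarith
    · -- x ≥ r, y < r: use t2 with r ≤ 2x
      have h := t1_bound hr hy hyr (by linarith : r ≤ 2*x)
      rw [mul_comm] at h
      linarith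
  · push_neg at hyr
    by_cases hxr : x < r
    · linarith [t1_bound hr hx hxr (by linarith : r ≤ 2*y)]
    · push_neg at hxr
      by_cases hxy : x ≤ y
      · linarith [t3_bound hr hxr hxε hy hxy]
      · push_neg at hxy
        have h := t3_bound hr hyr (by linarith : y < 2*ε) hx hxy.le
        rw [mul_comm] at h
        linarith

/-- Key growth estimate: with `G₀ = {|z-a| < ε} ⊆ G`, `0 < ε < 1`, one has
`(1/π)∬_{G₀} dA(ζ)/(|ζ-a||ζ-z|) ≤ 8 ln(1/|z-a|) + C` for `z ∈ G` with `|z-a|` small;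
consequently, if `|V^(z)| ≤ μ/|z-a|` on `G` then `ω = T_G V^` satisfies
`|ω(z)| ≤ μ(M + 8 ln(1/|z-a|))` and `M'|z-a|^{8μ} ≤ |exp(ω(z))| ≤ M'/|z-a|^{8μ}`
near `a`, for suitable constants `M, M' > 0`. -/
theorem growth_estimate
    (G : Set ℂ) (hGo : IsOpen G) (hGb : Bornology.IsBounded G)
    (a : ℂ) (ha : a ∈ G) (ε : ℝ) (hε0 : 0 < ε) (hε1 : ε < 1)
    (hG₀ : Metric.ball a ε ⊆ G) (μ : ℝ) (hμ : 0 < μ)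
    (Vh : ℂ → ℂ) (hVm : Measurable Vh)
    (hVb : ∀ z ∈ G, z ≠ a → ‖Vh z‖ ≤ μ / ‖z - a‖)
    (hVint : ∀ z ∈ G, Integrable (fun ζ => Vh ζ / (ζ - z)) (volume.restrict G))
    (ω : ℂ → ℂ)
    (hω : ∀ z, ω z = -(1 / (π : ℂ)) * ∫ ζ in G, Vh ζ / (ζ - z)) :
    (∃ C : ℝ, ∃ δ > 0, ∀ z ∈ G, 0 < ‖z - a‖ → ‖z - a‖ < δ →
      (1 / π) * (∫ ζ in Metric.ball a ε, 1 / (‖ζ - a‖ * ‖ζ - z‖)) ≤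
        8 * Real.log (1 / ‖z - a‖) + C) ∧
    (∃ M : ℝ, ∃ δ > 0, ∀ z ∈ G, 0 < ‖z - a‖ → ‖z - a‖ < δ →
      ‖ω z‖ ≤ μ * (M + 8 * Real.log (1 / ‖z - a‖))) ∧
    (∃ M' > (0 : ℝ), ∃ δ > 0, ∀ z ∈ G, 0 < ‖z - a‖ → ‖z - a‖ < δ →
      M' * ‖z - a‖ ^ (8 * μ) ≤ ‖Complex.exp (ω z)‖ ∧
      ‖Complex.exp (ω z)‖ ≤ M' / ‖z - a‖ ^ (8 * μ)) := by
  have hπ : (0:ℝ) < π := Real.pi_pos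
  set C₁ : ℝ := 8 + 2 * Real.log ε + 2 * Real.log (2*ε) with hC₁
  have hvolG : volume G ≠ ⊤ := hGb.measure_lt_top.ne
  set M₀ : ℝ := C₁ + 2 * (volume G).toReal / (π * ε^2) with hM₀
  clear_value M₀ C₁
  have main : ∀ z : ℂ, 0 < ‖z - a‖ → ‖z - a‖ < ε/2 →
      (∫ ζ in Metric.ball a ε, (‖ζ - a‖ * ‖ζ - z‖)⁻¹)
          ≤ π * (C₁ + 4 * Real.log (1/‖z - a‖)) ∧
      (z ∈ G → ‖ω z‖ ≤ μ * (M₀ + 4 * Real.log (1/‖z - a‖))) := by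
    intro z hr0 hrε
    set r := ‖z - a‖ with hrdef
    have hrne : r ≠ 0 := hr0.ne'
    have hrε' : r < ε := by linarith
    set f1 : ℝ → ℝ := (Ioo (0:ℝ) r).indicator (fun ρ => ρ⁻¹) with hf1
    set f3 : ℝ → ℝ := (Ico r ε).indicator (fun ρ => (ρ^2)⁻¹) with hf3
    set f4 : ℝ → ℝ := (Ico r (2*ε)).indicator (fun ρ => (ρ^2)⁻¹) with hf4
    set D : ℂ → ℝ :=
      fun ζ => (2/r) * f1 ‖ζ - a‖ + (2/r) * f1 ‖ζ - z‖ + f3 ‖ζ - a‖ + f4 ‖ζ - z‖ with hD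
    have hDint : Integrable D :=
      ((((aux1_int hr0 a).const_mul _).add ((aux1_int hr0 z).const_mul _)).add
        (aux2_int hr0 a)).add (aux2_int hr0 z)
    have I1 : Integrable (fun ζ : ℂ => 2/r * f1 ‖ζ - a‖) := by
      rw [hf1]; exact (aux1_int hr0 a).const_mul _
    have I2 : Integrable (fun ζ : ℂ => 2/r * f1 ‖ζ - z‖) := by
      rw [hf1]; exact (aux1_int hr0 z).const_mul _
    have I3 : Integrable (fun ζ : ℂ => f3 ‖ζ - a‖) := by rw [hf3]; exact aux2_int hr0 a
    have I4 : Integrable (fun ζ : ℂ => f4 ‖ζ - z‖) := by rw [hf4]; exact aux2_int hr0 z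
    have V1 : (∫ ζ : ℂ, 2/r * f1 ‖ζ - a‖) = 2/r * (2*π*r) := by
      rw [hf1, MeasureTheory.integral_const_mul, aux1_val hr0 a]
    have V2 : (∫ ζ : ℂ, 2/r * f1 ‖ζ - z‖) = 2/r * (2*π*r) := by
      rw [hf1, MeasureTheory.integral_const_mul, aux1_val hr0 z]
    have V3 : (∫ ζ : ℂ, f3 ‖ζ - a‖) = 2*π*Real.log (ε/r) := by
      rw [hf3, aux2_val hr0 hrε' a]
    have V4 : (∫ ζ : ℂ, f4 ‖ζ - z‖) = 2*π*Real.log ((2*ε)/r) := by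
      rw [hf4, aux2_val hr0 (by linarith : r < 2*ε) z]
    have hDval : ∫ ζ, D ζ = π * (C₁ + 4 * Real.log (1/r)) := by
      have e4 : ∫ ζ, D ζ = (∫ ζ : ℂ, (2/r * f1 ‖ζ - a‖ + 2/r * f1 ‖ζ - z‖ + f3 ‖ζ - a‖))
          + ∫ ζ : ℂ, f4 ‖ζ - z‖ := integral_add ((I1.add I2).add I3) I4
      have e3 : (∫ ζ : ℂ, (2/r * f1 ‖ζ - a‖ + 2/r * f1 ‖ζ - z‖ + f3 ‖ζ - a‖))
          = (∫ ζ : ℂ, (2/r * f1 ‖ζ - a‖ + 2/r * f1 ‖ζ - z‖)) + ∫ ζ : ℂ, f3 ‖ζ - a‖ :=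
        integral_add (I1.add I2) I3
      have e2 : (∫ ζ : ℂ, (2/r * f1 ‖ζ - a‖ + 2/r * f1 ‖ζ - z‖))
          = (∫ ζ : ℂ, 2/r * f1 ‖ζ - a‖) + ∫ ζ : ℂ, 2/r * f1 ‖ζ - z‖ := integral_add I1 I2
      rw [e4, e3, e2, V1, V2, V3, V4]
      rw [Real.log_div hε0.ne' hrne, Real.log_div (by positivity : (2*ε) ≠ 0) hrne,
        one_div, Real.log_inv, hC₁]
      field_simp
      ring
    have hf1nn : ∀ t : ℝ, 0 ≤ f1 t := fun t =>
      Set.indicator_nonneg (fun ρ hρ => inv_nonneg.2 (le_of_lt (Set.mem_Ioo.mp hρ).1)) t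
    have hf3nn : ∀ t : ℝ, 0 ≤ f3 t := fun t =>
      Set.indicator_nonneg (fun ρ _ => by positivity) t
    have hf4nn : ∀ t : ℝ, 0 ≤ f4 t := fun t =>
      Set.indicator_nonneg (fun ρ _ => by positivity) t
    have hDnonneg : ∀ ζ, 0 ≤ D ζ := fun ζ =>
      add_nonneg (add_nonneg (add_nonneg (mul_nonneg (by positivity) (hf1nn _))
        (mul_nonneg (by positivity) (hf1nn _))) (hf3nn _)) (hf4nn _)
    have hptw : ∀ ζ, ζ ∈ Metric.ball a ε → (‖ζ - a‖ * ‖ζ - z‖)⁻¹ ≤ D ζ := by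
      intro ζ hζ
      have hxε : ‖ζ - a‖ < ε := by rw [Metric.mem_ball, dist_eq_norm] at hζ; exact hζ
      have htri1 : r ≤ ‖ζ - a‖ + ‖ζ - z‖ := by
        have h := norm_sub_le_norm_sub_add_norm_sub z ζ a
        rw [norm_sub_rev z ζ] at h
        linarith
      have htri2 : ‖ζ - z‖ ≤ ‖ζ - a‖ + r := by
        have h := norm_sub_le_norm_sub_add_norm_sub ζ a z
        rw [norm_sub_rev a z] at h
        linarith
      exact pw_bound hr0 hrε hε0 (norm_nonneg _) hxε (norm_nonneg _) htri1 htri2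
    constructor
    · rw [← MeasureTheory.integral_indicator measurableSet_ball]
      refine le_trans (integral_mono_of_nonneg (ae_of_all _ ?_) hDint (ae_of_all _ ?_))
        (le_of_eq hDval)
      · exact fun ζ => Set.indicator_nonneg (fun ξ _ => by positivity) ζ
      · intro ζ
        by_cases hζ : ζ ∈ Metric.ball a ε
        · rw [Set.indicator_of_mem hζ]; exact hptw ζ hζ
        · rw [Set.indicator_of_notMem hζ]; exact hDnonneg ζ
    · intro hzG
      set E : ℂ → ℝ :=
        fun ζ => μ * D ζ + (2*μ/ε^2) * Set.indicator G (fun _ => (1:ℝ)) ζ with hE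
      have hGind : Integrable (Set.indicator G (fun _ => (1:ℝ))) :=
        (integrable_indicator_iff hGo.measurableSet).2
          (integrableOn_const hGb.measure_lt_top.ne)
      have hEint : Integrable E := (hDint.const_mul μ).add (hGind.const_mul _)
      have hEnonneg : ∀ ζ, 0 ≤ E ζ := fun ζ =>
        add_nonneg (mul_nonneg hμ.le (hDnonneg ζ))
          (mul_nonneg (by positivity) (Set.indicator_nonneg (fun _ _ => zero_le_one) ζ))
      have hEval : ∫ ζ, E ζ
          = μ * (π * (C₁ + 4 * Real.log (1/r))) + (2*μ/ε^2) * (volume G).toReal := by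
        have eE : ∫ ζ, E ζ = (∫ ζ, μ * D ζ)
            + ∫ ζ, (2*μ/ε^2) * Set.indicator G (fun _ => (1:ℝ)) ζ :=
          integral_add (hDint.const_mul μ) (hGind.const_mul _)
        rw [eE, MeasureTheory.integral_const_mul, MeasureTheory.integral_const_mul, hDval,
          MeasureTheory.integral_indicator_const (1:ℝ) hGo.measurableSet, smul_eq_mul, mul_one, Measure.real]
      have hbound : ∀ᵐ ζ ∂(volume.restrict G), ‖Vh ζ / (ζ - z)‖ ≤ E ζ := by
        have hmem : ∀ᵐ ζ ∂(volume.restrict G), ζ ∈ G :=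
          MeasureTheory.ae_restrict_mem hGo.measurableSet
        have hne : ∀ᵐ ζ ∂(volume.restrict G), ζ ≠ a := by
          apply MeasureTheory.ae_restrict_of_ae
          rw [MeasureTheory.ae_iff]
          simp only [ne_eq, not_not, Set.setOf_eq_eq_singleton]
          exact measure_singleton a
        filter_upwards [hmem, hne] with ζ hζG hζa
        by_cases hζz : ζ = z
        · have h0 : Vh ζ / (ζ - z) = 0 := by rw [hζz, sub_self, div_zero]
          rw [h0, norm_zero]; exact hEnonneg ζ
        · have hy0 : (0:ℝ) < ‖ζ - z‖ := norm_pos_iff.2 (sub_ne_zero.2 hζz)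
          have hx0 : (0:ℝ) < ‖ζ - a‖ := norm_pos_iff.2 (sub_ne_zero.2 hζa)
          have h2 : ‖Vh ζ‖ / ‖ζ - z‖ ≤ (μ / ‖ζ - a‖) / ‖ζ - z‖ := by
            gcongr
            exact hVb ζ hζG hζa
          have h3 : (μ / ‖ζ - a‖) / ‖ζ - z‖ = μ * (‖ζ - a‖ * ‖ζ - z‖)⁻¹ := by
            rw [div_div, div_eq_mul_inv]
          by_cases hball : ζ ∈ Metric.ball a ε
          · have h5 : 0 ≤ (2*μ/ε^2) * Set.indicator G (fun _ => (1:ℝ)) ζ :=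
              mul_nonneg (by positivity) (Set.indicator_nonneg (fun _ _ => zero_le_one) ζ)
            calc ‖Vh ζ / (ζ - z)‖ = ‖Vh ζ‖ / ‖ζ - z‖ := norm_div _ _
              _ ≤ (μ / ‖ζ - a‖) / ‖ζ - z‖ := h2
              _ = μ * (‖ζ - a‖ * ‖ζ - z‖)⁻¹ := h3
              _ ≤ μ * D ζ := mul_le_mul_of_nonneg_left (hptw ζ hball) hμ.le
              _ ≤ E ζ := by rw [hE]; exact le_add_of_nonneg_right h5
          · have hxout : ε ≤ ‖ζ - a‖ := by
              rw [Metric.mem_ball, dist_eq_norm, not_lt] at hball; exact hball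
            have hyout : ε/2 ≤ ‖ζ - z‖ := by
              have htri : ‖ζ - a‖ ≤ ‖ζ - z‖ + ‖z - a‖ :=
                norm_sub_le_norm_sub_add_norm_sub ζ z a
              linarith
            have hprod : ε * (ε/2) ≤ ‖ζ - a‖ * ‖ζ - z‖ :=
              mul_le_mul hxout hyout (by positivity) (norm_nonneg _)
            have hinv : (‖ζ - a‖ * ‖ζ - z‖)⁻¹ ≤ (ε * (ε/2))⁻¹ :=
              inv_anti₀ (by positivity) hprod
            have heq : μ * (ε * (ε/2))⁻¹ = 2*μ/ε^2 := by
              field_simp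
            calc ‖Vh ζ / (ζ - z)‖ = ‖Vh ζ‖ / ‖ζ - z‖ := norm_div _ _
              _ ≤ (μ / ‖ζ - a‖) / ‖ζ - z‖ := h2
              _ = μ * (‖ζ - a‖ * ‖ζ - z‖)⁻¹ := h3
              _ ≤ μ * (ε * (ε/2))⁻¹ := mul_le_mul_of_nonneg_left hinv hμ.le
              _ = (2*μ/ε^2) * Set.indicator G (fun _ => (1:ℝ)) ζ := by
                  rw [Set.indicator_of_mem hζG, heq, mul_one]
              _ ≤ E ζ := by
                  rw [hE]; exact le_add_of_nonneg_left (mul_nonneg hμ.le (hDnonneg ζ))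
      have hωz : ‖ω z‖ = (1/π) * ‖∫ ζ in G, Vh ζ / (ζ - z)‖ := by
        rw [hω z, neg_mul, norm_neg, norm_mul]
        congr 1
        simp [map_div₀, Complex.norm_real, abs_of_pos hπ]
      have hInt := norm_integral_le_integral_norm (μ := volume.restrict G)
        (fun ζ => Vh ζ / (ζ - z))
      have hle2 : ∫ ζ in G, ‖Vh ζ / (ζ - z)‖ ≤ ∫ ζ, E ζ :=
        le_trans (integral_mono_of_nonneg (ae_of_all _ fun ζ => norm_nonneg _)
          hEint.restrict hbound)
          (setIntegral_le_integral hEint (ae_of_all _ hEnonneg))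
      rw [hωz]
      calc (1/π) * ‖∫ ζ in G, Vh ζ / (ζ - z)‖
          ≤ (1/π) * (∫ ζ, E ζ) :=
            mul_le_mul_of_nonneg_left (le_trans hInt hle2) (by positivity)
        _ = μ * (M₀ + 4 * Real.log (1/r)) := by
            rw [hEval, hM₀]
            field_simp
            ring
  refine ⟨⟨C₁, ε/2, by positivity, ?_⟩, ⟨M₀, ε/2, by positivity, ?_⟩, ?_⟩
  · intro z hzG hr0 hrδ
    have h := (main z hr0 hrδ).1
    have hL : 0 ≤ Real.log (1/‖z - a‖) :=
      Real.log_nonneg (one_le_one_div hr0 (by linarith))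
    have hconv : (∫ ζ in Metric.ball a ε, 1 / (‖ζ - a‖ * ‖ζ - z‖))
        = ∫ ζ in Metric.ball a ε, (‖ζ - a‖ * ‖ζ - z‖)⁻¹ := by simp_rw [one_div]
    rw [hconv]
    have h2 : (1/π) * (∫ ζ in Metric.ball a ε, (‖ζ - a‖ * ‖ζ - z‖)⁻¹)
        ≤ C₁ + 4 * Real.log (1/‖z - a‖) := by
      have h3 := mul_le_mul_of_nonneg_left h (by positivity : (0:ℝ) ≤ 1/π)
      rwa [show (1/π) * (π * (C₁ + 4 * Real.log (1/‖z - a‖)))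
        = C₁ + 4 * Real.log (1/‖z - a‖) from by field_simp] at h3
    linarith
  · intro z hzG hr0 hrδ
    have h := (main z hr0 hrδ).2 hzG
    have hL : 0 ≤ Real.log (1/‖z - a‖) :=
      Real.log_nonneg (one_le_one_div hr0 (by linarith))
    have : μ * (M₀ + 4 * Real.log (1/‖z - a‖)) ≤ μ * (M₀ + 8 * Real.log (1/‖z - a‖)) :=
      mul_le_mul_of_nonneg_left (by linarith) hμ.le
    linarith
  · refine ⟨Real.exp (μ * M₀), Real.exp_pos _, min (ε/2) (Real.exp (-(M₀/2))),
      lt_min (by positivity) (Real.exp_pos _), ?_⟩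
    intro z hzG hr0 hrδ
    obtain ⟨hδ1, hδ2⟩ := lt_min_iff.mp hrδ
    have h := (main z hr0 hδ1).2 hzG
    have hr1 : ‖z - a‖ < 1 := by linarith
    have hlogr_le : Real.log ‖z - a‖ ≤ -(M₀/2) := (Real.log_le_iff_le_exp hr0).2 hδ2.le
    have hlogr_np : Real.log ‖z - a‖ ≤ 0 := Real.log_nonpos hr0.le hr1.le
    rw [one_div, Real.log_inv] at h
    have hre_abs : |(ω z).re| ≤ ‖ω z‖ := Complex.abs_re_le_norm (ω z)
    have hh : μ * (M₀ + 4 * -Real.log ‖z - a‖)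
        = μ * M₀ - 4 * (μ * Real.log ‖z - a‖) := by ring
    rw [hh] at h
    have hre_u : (ω z).re ≤ μ * M₀ - 4 * (μ * Real.log ‖z - a‖) := by
      linarith [le_abs_self (ω z).re]
    have hre_l : -(μ * M₀ - 4 * (μ * Real.log ‖z - a‖)) ≤ (ω z).re := by
      linarith [neg_abs_le (ω z).re]
    have hnorm : ‖Complex.exp (ω z)‖ = Real.exp (ω z).re := by
      rw [Complex.norm_exp]
    have hrpow : ‖z - a‖ ^ (8*μ) = Real.exp (Real.log ‖z - a‖ * (8*μ)) :=
      Real.rpow_def_of_pos hr0 _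
    have hmul : μ * Real.log ‖z - a‖ ≤ μ * (-(M₀/2)) :=
      mul_le_mul_of_nonneg_left hlogr_le hμ.le
    have hmul0 : μ * Real.log ‖z - a‖ ≤ 0 :=
      mul_nonpos_of_nonneg_of_nonpos hμ.le hlogr_np
    constructor
    · rw [hnorm, hrpow, ← Real.exp_add]
      exact Real.exp_le_exp.mpr (by nlinarith [hre_l, hmul])
    · rw [hnorm, hrpow, ← Real.exp_sub]
      exact Real.exp_le_exp.mpr (by nlinarith [hre_u, hmul0])
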